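/- Let Y be an integrable random vector in ℝ^d. Then E[Y] lies in the affine hull of the support of the law of Y. -/

import Mathlib

open MeasureTheory

/-- The support of a measure on `ℝ^d`: the set of points all of whose open
neighborhoods have positive measure. -/
def measSupport {d : ℕ} (μ : Measure (Fin d → ℝ)) : Set (Fin d → ℝ) :=
  {y | ∀ U : Set (Fin d → ℝ), IsOpen U → y ∈ U → μ U ≠ 0}

lemma measure_compl_measSupport {d : ℕ} (μ : Measure (Fin d → ℝ)) :
    μ (measSupport μ)ᶜ = 0 := by
  have hcompl : (measSupport μ)ᶜ = ⋃₀ {U : Set (Fin d → ℝ) | IsOpen U ∧ μ U = 0} := by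
    ext y
    simp only [measSupport, Set.mem_compl_iff, Set.mem_setOf_eq, not_forall, Set.mem_sUnion]
    constructor
    · rintro ⟨U, hU, hyU, hμU⟩
      exact ⟨U, ⟨hU, not_not.mp hμU⟩, hyU⟩
    · rintro ⟨U, ⟨hU, hμU⟩, hyU⟩
      exact ⟨U, hU, hyU, not_not.mpr hμU⟩
  obtain ⟨T, hTc, hTsub, hTU⟩ := TopologicalSpace.isOpen_sUnion_countable
    {U : Set (Fin d → ℝ) | IsOpen U ∧ μ U = 0} (fun s hs => hs.1)
  rw [hcompl, ← hTU]
  exact (measure_sUnion_null_iff hTc).mpr fun U hU => (hTsub hU).2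

/-- The expectation of an integrable random vector lies in the affine hull of the
support of its law. -/
theorem mean_mem_affineSpan_support {d : ℕ}
    {Ω : Type*} [MeasurableSpace Ω] (P : Measure Ω) [IsProbabilityMeasure P]
    (Y : Ω → Fin d → ℝ) (hY : Measurable Y) (hint : Integrable Y P) :
    (∫ ω, Y ω ∂P) ∈ affineSpan ℝ (measSupport (P.map Y)) := by
  set μ := P.map Y with hμ
  have : IsProbabilityMeasure μ := Measure.isProbabilityMeasure_map hY.aemeasurable
  have hnull : μ (measSupport μ)ᶜ = 0 := measure_compl_measSupport μ
  have hne : (measSupport μ).Nonempty := by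
    by_contra h
    rw [Set.not_nonempty_iff_eq_empty] at h
    rw [h, Set.compl_empty] at hnull
    simp at hnull
  set S := affineSpan ℝ (measSupport μ) with hS
  have hSclosed : IsClosed (S : Set (Fin d → ℝ)) := S.closed_of_finiteDimensional
  have hSconv : Convex ℝ (S : Set (Fin d → ℝ)) := S.convex
  have hSne : (S : Set (Fin d → ℝ)).Nonempty := (affineSpan_nonempty (k := ℝ)).mpr hne
  have hSnull : μ ((S : Set (Fin d → ℝ)))ᶜ = 0 :=
    measure_mono_null (Set.compl_subset_compl.mpr (subset_affineSpan ℝ _)) hnull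
  have haeμ : ∀ᵐ y ∂μ, y ∈ (S : Set (Fin d → ℝ)) := by
    rw [ae_iff]
    exact hSnull
  have hae : ∀ᵐ ω ∂P, Y ω ∈ (S : Set (Fin d → ℝ)) :=
    (ae_map_iff hY.aemeasurable hSclosed.measurableSet).mp haeμ
  exact hSconv.integral_mem hSclosed hae hint
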